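/- Let d ≥ 1, let u : ℝ^d → ℂ be a Schwartz function, and let f : ℝ^d → ℂ be continuously differentiable with f and its gradient ∇f bounded. Then −Re ∫_{ℝ^d} Δu(x) · conj( −i u(x) f(x) ) dx = ∫_{ℝ^d} |∇u(x)|² Im( f(x) ) dx − ∫_{ℝ^d} Im( conj(u(x)) · ∇u(x) · conj(∇f(x)) ) dx, where ∇u · conj(∇f) denotes Σⱼ ∂ⱼu · conj(∂ⱼ f) and |∇u|² = Σⱼ |∂ⱼ u|². -/

import Mathlib

open MeasureTheory Real Complex ComplexConjugate SchwartzMap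
open scoped ENNReal


/-- The Laplacian `Δu = Σⱼ ∂ⱼ²u` on `ℝ^d`. -/
noncomputable def laplacianE (d : ℕ) (u : EuclideanSpace ℝ (Fin d) → ℂ)
    (x : EuclideanSpace ℝ (Fin d)) : ℂ :=
  ∑ j : Fin d,
    fderiv ℝ (fun y => fderiv ℝ u y (EuclideanSpace.single j 1)) x (EuclideanSpace.single j 1)

namespace KDaux

variable {d : ℕ}

def BC (h : EuclideanSpace ℝ (Fin d) → ℂ) : Prop :=
  Continuous h ∧ ∃ M, ∀ x, ‖h x‖ ≤ M

lemma BC.mul {h1 h2 : EuclideanSpace ℝ (Fin d) → ℂ} (H1 : BC h1) (H2 : BC h2) :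
    BC (fun x => h1 x * h2 x) := by
  obtain ⟨c1, M1, b1⟩ := H1
  obtain ⟨c2, M2, b2⟩ := H2
  refine ⟨c1.mul c2, M1 * M2, fun x => ?_⟩
  calc ‖h1 x * h2 x‖ = ‖h1 x‖ * ‖h2 x‖ := norm_mul _ _
    _ ≤ M1 * M2 :=
      mul_le_mul (b1 x) (b2 x) (norm_nonneg _) ((norm_nonneg _).trans (b1 x))

lemma BC.conj {h : EuclideanSpace ℝ (Fin d) → ℂ} (H : BC h) :
    BC (fun x => conj (h x)) := by
  obtain ⟨c, M, b⟩ := H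
  exact ⟨continuous_star.comp c, M, fun x => by simpa using b x⟩

lemma BC.schwartz (φ : SchwartzMap (EuclideanSpace ℝ (Fin d)) ℂ) : BC (⇑φ) :=
  ⟨φ.continuous, (SchwartzMap.seminorm ℝ 0 0) φ, fun x => φ.norm_le_seminorm ℝ x⟩

lemma integrable_bc_mul_schwartz {h : EuclideanSpace ℝ (Fin d) → ℂ} (H : BC h)
    (φ : SchwartzMap (EuclideanSpace ℝ (Fin d)) ℂ) :
    Integrable (fun x => h x * φ x) := by
  obtain ⟨c, M, b⟩ := H
  exact φ.integrable.bdd_mul c.aestronglyMeasurable (ae_of_all _ b)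

lemma fderiv_conj_apply (w : EuclideanSpace ℝ (Fin d) → ℂ)
    (x v : EuclideanSpace ℝ (Fin d)) :
    fderiv ℝ (fun y => conj (w y)) x v = conj (fderiv ℝ w x v) := by
  have h := Complex.conjCLE.comp_fderiv (f := w) (x := x)
  have h2 : (fun y => conj (w y)) = ⇑Complex.conjCLE ∘ w := by
    funext y; simp
  rw [h2, h]; simp

lemma diff_conj {w : EuclideanSpace ℝ (Fin d) → ℂ} (hw : Differentiable ℝ w) :
    Differentiable ℝ (fun y => conj (w y)) := by
  have h2 : (fun y => conj (w y)) = ⇑Complex.conjCLE ∘ w := by funext y; simp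
  rw [h2]; exact Complex.conjCLE.differentiable.comp hw


lemma cintegral_im {α : Type*} [MeasurableSpace α] {μ : MeasureTheory.Measure α}
    {g : α → ℂ} (h : Integrable g μ) :
    (∫ x, g x ∂μ).im = ∫ x, (g x).im ∂μ := by
  have := ContinuousLinearMap.integral_comp_comm Complex.imCLM h
  simpa using this.symm

lemma step (u : SchwartzMap (EuclideanSpace ℝ (Fin d)) ℂ)
    (f : EuclideanSpace ℝ (Fin d) → ℂ) (hf : ContDiff ℝ 1 f)
    (hfb : ∃ M : ℝ, ∀ x, ‖f x‖ ≤ M)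
    (hdfb : ∃ M : ℝ, ∀ x, ‖fderiv ℝ f x‖ ≤ M)
    (v : EuclideanSpace ℝ (Fin d)) (hv : ‖v‖ = 1) :
    ∫ x, (conj (u x) * conj (f x)) * fderiv ℝ (fun y => fderiv ℝ u y v) x v
      = -(∫ x, conj (u x) * conj (fderiv ℝ f x v) * fderiv ℝ u x v)
        - ∫ x, conj (f x) * conj (fderiv ℝ u x v) * fderiv ℝ u x v := by
  set ψ : SchwartzMap (EuclideanSpace ℝ (Fin d)) ℂ := LineDeriv.lineDerivOpCLM ℝ (SchwartzMap (EuclideanSpace ℝ (Fin d)) ℂ) v u with hψ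
  have hψcoe : ⇑ψ = fun y => fderiv ℝ u y v := by
    funext y; simp [hψ, SchwartzMap.lineDerivOp_apply_eq_fderiv]
  set g : EuclideanSpace ℝ (Fin d) → ℂ := fun x => conj (u x) * conj (f x) with hgdef
  have hfd : Differentiable ℝ f := hf.differentiable one_ne_zero
  have hg : Differentiable ℝ g := (diff_conj u.differentiable).mul (diff_conj hfd)
  have Bu : BC (⇑u) := BC.schwartz u
  have Bdu : BC (⇑ψ) := BC.schwartz ψ
  have Bf : BC f := ⟨hf.continuous, hfb⟩
  have Bdf : BC (fun x => fderiv ℝ f x v) := by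
    refine ⟨(hf.continuous_fderiv one_ne_zero).clm_apply continuous_const, ?_⟩
    obtain ⟨M, hM⟩ := hdfb
    refine ⟨M, fun x => ?_⟩
    calc ‖fderiv ℝ f x v‖ ≤ ‖fderiv ℝ f x‖ * ‖v‖ := (fderiv ℝ f x).le_opNorm v
      _ ≤ M := by rw [hv, mul_one]; exact hM x
  have hgd : ∀ x, fderiv ℝ g x v
      = conj (u x) * conj (fderiv ℝ f x v) + conj (f x) * conj (fderiv ℝ u x v) := by
    intro x
    rw [hgdef, fderiv_fun_mul ((diff_conj u.differentiable) x) ((diff_conj hfd) x)]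
    simp [fderiv_conj_apply, smul_eq_mul]
  have hint1 : Integrable (fun x => fderiv ℝ g x v * ψ x) := by
    have : (fun x => fderiv ℝ g x v * ψ x)
        = fun x => (fun y => conj (u y) * conj (fderiv ℝ f y v)) x * ψ x
          + (fun y => conj (f y) * conj (ψ y)) x * ψ x := by
      funext x; rw [hgd x]
      simp only [hψcoe]
      ring
    rw [this]
    exact (integrable_bc_mul_schwartz (Bu.conj.mul Bdf.conj) ψ).add
      (integrable_bc_mul_schwartz (Bf.conj.mul Bdu.conj) ψ)
  have hint2 : Integrable (fun x => g x * fderiv ℝ (⇑ψ) x v) :=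
    integrable_bc_mul_schwartz (Bu.conj.mul Bf.conj) (LineDeriv.lineDerivOpCLM ℝ (SchwartzMap (EuclideanSpace ℝ (Fin d)) ℂ) v ψ)
  have hint3 : Integrable (fun x => g x * ψ x) :=
    integrable_bc_mul_schwartz (Bu.conj.mul Bf.conj) ψ
  have ibp := integral_mul_fderiv_eq_neg_fderiv_mul_of_integrable
    hint1 hint2 hint3 (fun x _ => hg x) (fun x _ => ψ.differentiable x)
  have e1 : (fun x => g x * fderiv ℝ (⇑ψ) x v)
      = fun x => (conj (u x) * conj (f x)) * fderiv ℝ (fun y => fderiv ℝ u y v) x v := by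
    funext x; rw [hψcoe]
  have e2 : ∫ x, fderiv ℝ g x v * ψ x
      = (∫ x, conj (u x) * conj (fderiv ℝ f x v) * fderiv ℝ u x v)
        + ∫ x, conj (f x) * conj (fderiv ℝ u x v) * fderiv ℝ u x v := by
    rw [← integral_add]
    · congr 1; funext x; rw [hgd x]
      simp only [hψcoe]; ring
    · have := integrable_bc_mul_schwartz (Bu.conj.mul Bdf.conj) ψ
      apply this.congr; filter_upwards with x; simp only [hψcoe]
    · have := integrable_bc_mul_schwartz (Bf.conj.mul Bdu.conj) ψ
      apply this.congr; filter_upwards with x; simp only [hψcoe]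
  rw [← e1, ibp, e2]
  ring

end KDaux


/-- Integration by parts identity for the kinetic-energy drift term:
`−Re ∫ Δu conj(−iuf) dx = ∫ |∇u|² Im f dx − ∫ Im(conj(u) ∇u·conj(∇f)) dx`. -/
theorem kinetic_drift_integration_by_parts
    (d : ℕ) (hd : 1 ≤ d) (u : SchwartzMap (EuclideanSpace ℝ (Fin d)) ℂ)
    (f : EuclideanSpace ℝ (Fin d) → ℂ) (hf : ContDiff ℝ 1 f)
    (hfb : ∃ M : ℝ, ∀ x, ‖f x‖ ≤ M)
    (hdfb : ∃ M : ℝ, ∀ x, ‖fderiv ℝ f x‖ ≤ M) :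
    -(∫ x : EuclideanSpace ℝ (Fin d),
        (laplacianE d ⇑u x * conj (-Complex.I * u x * f x)).re) =
      (∫ x : EuclideanSpace ℝ (Fin d),
        (∑ j : Fin d, ‖fderiv ℝ (⇑u) x (EuclideanSpace.single j 1)‖ ^ 2) *
          (f x).im) -
      ∫ x : EuclideanSpace ℝ (Fin d),
        (conj (u x) *
          ∑ j : Fin d, fderiv ℝ (⇑u) x (EuclideanSpace.single j 1) *
            conj (fderiv ℝ f x (EuclideanSpace.single j 1))).im := by
  classical
  have hv : ∀ j : Fin d, ‖(EuclideanSpace.single j (1:ℝ))‖ = 1 := by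
    intro j; simp [EuclideanSpace.norm_single]
  have hψc : ∀ j : Fin d, ⇑(LineDeriv.lineDerivOpCLM ℝ (SchwartzMap (EuclideanSpace ℝ (Fin d)) ℂ) (EuclideanSpace.single j (1:ℝ)) u)
      = fun y => fderiv ℝ (⇑u) y (EuclideanSpace.single j 1) := by
    intro j; funext y; simp [SchwartzMap.lineDerivOp_apply_eq_fderiv]
  have hfd : Differentiable ℝ f := hf.differentiable one_ne_zero
  have Bu : KDaux.BC (⇑u) := KDaux.BC.schwartz u
  have Bdu : ∀ j : Fin d, KDaux.BC fun x => fderiv ℝ (⇑u) x (EuclideanSpace.single j 1) := by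
    intro j; rw [← hψc j]
    exact KDaux.BC.schwartz _
  have Bf : KDaux.BC f := ⟨hf.continuous, hfb⟩
  have Bdf : ∀ j : Fin d, KDaux.BC fun x => fderiv ℝ f x (EuclideanSpace.single j 1) := by
    intro j
    refine ⟨(hf.continuous_fderiv one_ne_zero).clm_apply continuous_const, ?_⟩
    obtain ⟨M, hM⟩ := hdfb
    refine ⟨M, fun x => ?_⟩
    calc ‖fderiv ℝ f x (EuclideanSpace.single j 1)‖
        ≤ ‖fderiv ℝ f x‖ * ‖(EuclideanSpace.single j (1:ℝ))‖ := (fderiv ℝ f x).le_opNorm _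
      _ ≤ M := by rw [hv j, mul_one]; exact hM x
  -- integrabilities
  have hQj : ∀ j : Fin d, Integrable
      (fun x => conj (u x) * conj (fderiv ℝ f x (EuclideanSpace.single j 1)) *
        fderiv ℝ (⇑u) x (EuclideanSpace.single j 1)) := by
    intro j
    have := KDaux.integrable_bc_mul_schwartz ((Bu.conj).mul (Bdf j).conj)
      (LineDeriv.lineDerivOpCLM ℝ (SchwartzMap (EuclideanSpace ℝ (Fin d)) ℂ) (EuclideanSpace.single j (1:ℝ)) u)
    apply this.congr; filter_upwards with x; simp [hψc j, SchwartzMap.lineDerivOp_apply_eq_fderiv]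
  have hPj : ∀ j : Fin d, Integrable
      (fun x => conj (f x) * conj (fderiv ℝ (⇑u) x (EuclideanSpace.single j 1)) *
        fderiv ℝ (⇑u) x (EuclideanSpace.single j 1)) := by
    intro j
    have := KDaux.integrable_bc_mul_schwartz ((Bf.conj).mul (Bdu j).conj)
      (LineDeriv.lineDerivOpCLM ℝ (SchwartzMap (EuclideanSpace ℝ (Fin d)) ℂ) (EuclideanSpace.single j (1:ℝ)) u)
    apply this.congr; filter_upwards with x; simp [hψc j, SchwartzMap.lineDerivOp_apply_eq_fderiv]
  have hHj : ∀ j : Fin d, Integrable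
      (fun x => (conj (u x) * conj (f x)) *
        fderiv ℝ (fun y => fderiv ℝ (⇑u) y (EuclideanSpace.single j 1)) x
          (EuclideanSpace.single j 1)) := by
    intro j
    have := KDaux.integrable_bc_mul_schwartz ((Bu.conj).mul Bf.conj)
      (LineDeriv.lineDerivOpCLM ℝ (SchwartzMap (EuclideanSpace ℝ (Fin d)) ℂ) (EuclideanSpace.single j (1:ℝ))
        (LineDeriv.lineDerivOpCLM ℝ (SchwartzMap (EuclideanSpace ℝ (Fin d)) ℂ) (EuclideanSpace.single j (1:ℝ)) u))
    apply this.congr; filter_upwards with x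
    have h' := hψc j
    simp only [LineDeriv.lineDerivOpCLM_apply] at h'
    simp only [LineDeriv.lineDerivOpCLM_apply, SchwartzMap.lineDerivOp_apply_eq_fderiv, h']
  -- the complex integrals
  set Q : ℂ := ∫ x, conj (u x) *
      ∑ j : Fin d, fderiv ℝ (⇑u) x (EuclideanSpace.single j 1) *
        conj (fderiv ℝ f x (EuclideanSpace.single j 1)) with hQdef
  set P : ℂ := ∫ x, ((∑ j : Fin d,
      ‖fderiv ℝ (⇑u) x (EuclideanSpace.single j 1)‖ ^ 2 : ℝ) : ℂ) *
        conj (f x) with hPdef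
  have hQptw : (fun x => conj (u x) *
      ∑ j : Fin d, fderiv ℝ (⇑u) x (EuclideanSpace.single j 1) *
        conj (fderiv ℝ f x (EuclideanSpace.single j 1)))
      = fun x => ∑ j : Fin d,
        conj (u x) * conj (fderiv ℝ f x (EuclideanSpace.single j 1)) *
          fderiv ℝ (⇑u) x (EuclideanSpace.single j 1) := by
    funext x; rw [Finset.mul_sum]; exact Finset.sum_congr rfl (fun j _ => by ring)
  have hPptw : (fun x => ((∑ j : Fin d,
      ‖fderiv ℝ (⇑u) x (EuclideanSpace.single j 1)‖ ^ 2 : ℝ) : ℂ) * conj (f x))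
      = fun x => ∑ j : Fin d,
        conj (f x) * conj (fderiv ℝ (⇑u) x (EuclideanSpace.single j 1)) *
          fderiv ℝ (⇑u) x (EuclideanSpace.single j 1) := by
    funext x
    rw [Complex.ofReal_sum, Finset.sum_mul]
    refine Finset.sum_congr rfl (fun j _ => ?_)
    rw [Complex.sq_norm, ← Complex.mul_conj]
    ring
  have hQint : Integrable (fun x => conj (u x) *
      ∑ j : Fin d, fderiv ℝ (⇑u) x (EuclideanSpace.single j 1) *
        conj (fderiv ℝ f x (EuclideanSpace.single j 1))) := by
    rw [hQptw]; exact integrable_finset_sum _ (fun j _ => hQj j)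
  have hPint : Integrable (fun x => ((∑ j : Fin d,
      ‖fderiv ℝ (⇑u) x (EuclideanSpace.single j 1)‖ ^ 2 : ℝ) : ℂ) *
        conj (f x)) := by
    rw [hPptw]; exact integrable_finset_sum _ (fun j _ => hPj j)
  have hQ : Q = ∑ j : Fin d,
      ∫ x, conj (u x) * conj (fderiv ℝ f x (EuclideanSpace.single j 1)) *
        fderiv ℝ (⇑u) x (EuclideanSpace.single j 1) := by
    rw [hQdef, hQptw]; exact integral_finset_sum _ (fun j _ => hQj j)
  have hP : P = ∑ j : Fin d,
      ∫ x, conj (f x) * conj (fderiv ℝ (⇑u) x (EuclideanSpace.single j 1)) *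
        fderiv ℝ (⇑u) x (EuclideanSpace.single j 1) := by
    rw [hPdef, hPptw]; exact integral_finset_sum _ (fun j _ => hPj j)
  -- the main complex identity
  have hHptw : (fun x => laplacianE d ⇑u x * conj (u x) * conj (f x))
      = fun x => ∑ j : Fin d, (conj (u x) * conj (f x)) *
          fderiv ℝ (fun y => fderiv ℝ (⇑u) y (EuclideanSpace.single j 1)) x
            (EuclideanSpace.single j 1) := by
    funext x
    simp only [laplacianE]
    rw [Finset.sum_mul, Finset.sum_mul]
    exact Finset.sum_congr rfl (fun j _ => by ring)
  have hHint : Integrable (fun x => laplacianE d ⇑u x * conj (u x) * conj (f x)) := by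
    rw [hHptw]; exact integrable_finset_sum _ (fun j _ => hHj j)
  have hmain : (∫ x, laplacianE d ⇑u x * conj (u x) * conj (f x)) = -Q - P := by
    rw [hHptw, integral_finset_sum _ (fun j _ => hHj j)]
    have hstep : ∀ j : Fin d,
        (∫ x, (conj (u x) * conj (f x)) *
            fderiv ℝ (fun y => fderiv ℝ (⇑u) y (EuclideanSpace.single j 1)) x
              (EuclideanSpace.single j 1))
        = -(∫ x, conj (u x) * conj (fderiv ℝ f x (EuclideanSpace.single j 1)) *
              fderiv ℝ (⇑u) x (EuclideanSpace.single j 1))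
          - ∫ x, conj (f x) * conj (fderiv ℝ (⇑u) x (EuclideanSpace.single j 1)) *
              fderiv ℝ (⇑u) x (EuclideanSpace.single j 1) :=
      fun j => KDaux.step u f hf hfb hdfb (EuclideanSpace.single j (1:ℝ)) (hv j)
    rw [Finset.sum_congr rfl (fun j _ => hstep j), hQ, hP]
    rw [Finset.sum_sub_distrib]
    simp
  -- put everything together
  have hLHS : -(∫ x, (laplacianE d ⇑u x * conj (-Complex.I * u x * f x)).re)
      = (∫ x, laplacianE d ⇑u x * conj (u x) * conj (f x)).im := by
    rw [KDaux.cintegral_im hHint, ← integral_neg]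
    congr 1; funext x
    simp only [map_mul, map_neg, Complex.conj_I, neg_neg, Complex.mul_re, Complex.mul_im,
      Complex.neg_re, Complex.neg_im, Complex.I_re, Complex.I_im, Complex.conj_re,
      Complex.conj_im]
    ring
  rw [hLHS, hmain]
  have hQim : Q.im = ∫ x, (conj (u x) *
      ∑ j : Fin d, fderiv ℝ (⇑u) x (EuclideanSpace.single j 1) *
        conj (fderiv ℝ f x (EuclideanSpace.single j 1))).im :=
    KDaux.cintegral_im hQint
  have hPim : P.im = -(∫ x, (∑ j : Fin d,
      ‖fderiv ℝ (⇑u) x (EuclideanSpace.single j 1)‖ ^ 2) * (f x).im) := by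
    rw [hPdef, KDaux.cintegral_im hPint, ← integral_neg]
    congr 1; funext x
    simp only [Complex.mul_im, Complex.ofReal_re, Complex.ofReal_im, Complex.conj_im,
      Complex.conj_re]
    ring
  simp only [Complex.sub_im, Complex.neg_im]
  rw [hQim, hPim]
  ring
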